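/- In the generalized Petersen graph P(n,k) with n ≥ 2k and k ≥ 1, the set S = {x_1, x_2, …, x_{2k}, y_k, y_{k+1}} is a zero forcing set. -/
import Mathlib

open SimpleGraph

namespace LF

variable {V : Type*}

/-- Vertices eventually forced blue, starting from `S`, with leak set `L`:
a blue vertex not in `L` whose every neighbor other than `w` is blue forces `w`. -/
inductive Forced (G : SimpleGraph V) (L S : Set V) : V → Prop
  | init (v : V) (hv : v ∈ S) : Forced G L S v
  | force (b w : V) (hb : Forced G L S b) (hbL : b ∉ L) (hadj : G.Adj b w)
      (hall : ∀ u, G.Adj b u → u ≠ w → Forced G L S u) : Forced G L S w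

/-- `S` is an ℓ-leaky forcing set of `G`. -/
def IsLeakyForcingSet (G : SimpleGraph V) (ℓ : ℕ) (S : Set V) : Prop :=
  ∀ L : Set V, L.ncard ≤ ℓ → ∀ v, Forced G L S v

/-- The ℓ-leaky forcing number `Z_{(ℓ)}(G)`. -/
noncomputable def leakyForcingNumber (G : SimpleGraph V) [Fintype V] (ℓ : ℕ) : ℕ :=
  sInf {k | ∃ S : Finset V, S.card = k ∧ IsLeakyForcingSet G ℓ ↑S}

/-- An ℓ-leaky fort: a nonempty set `F` such that at most ℓ vertices outside `F`
have exactly one neighbor in `F`. -/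
def IsLeakyFort (G : SimpleGraph V) (ℓ : ℕ) (F : Set V) : Prop :=
  F.Nonempty ∧ {v | v ∉ F ∧ ∃! u, u ∈ F ∧ G.Adj v u}.ncard ≤ ℓ

/-- The path graph on `n` vertices. -/
def pathGraph (n : ℕ) : SimpleGraph (Fin n) :=
  SimpleGraph.fromRel (fun i j => i.val + 1 = j.val)

/-- The cycle graph on `n` vertices. -/
def cycleGraph (n : ℕ) : SimpleGraph (Fin n) :=
  SimpleGraph.fromRel (fun i j => (i.val + 1) % n = j.val)

/-- The star graph on `n` vertices, with center `0`. -/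
def starGraph (n : ℕ) : SimpleGraph (Fin n) :=
  SimpleGraph.fromRel (fun i _ => i.val = 0)

/-- The generalized Petersen graph `P(n,k)`: `Sum.inl i` is the inner vertex `x_{i+1}`,
`Sum.inr i` is the outer vertex `y_{i+1}` (0-indexed). -/
def petersen (n k : ℕ) : SimpleGraph (Fin n ⊕ Fin n) :=
  SimpleGraph.fromRel (fun a b =>
    match a, b with
    | Sum.inr i, Sum.inr j => (i.val + 1) % n = j.val
    | Sum.inl i, Sum.inr j => i = j
    | Sum.inl i, Sum.inl j => (i.val + k) % n = j.val
    | _, _ => False)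

end LF

section Helpers

private lemma LFmod2 {n a : ℕ} (h : a < 2 * n) :
    (a < n ∧ a % n = a) ∨ (n ≤ a ∧ a % n = a - n) := by
  rcases lt_or_ge a n with h' | h'
  · exact Or.inl ⟨h', Nat.mod_eq_of_lt h'⟩
  · exact Or.inr ⟨h', by rw [Nat.mod_eq_sub_mod h', Nat.mod_eq_of_lt (by omega)]⟩

/-- Classification of neighbors of an inner vertex. -/
private lemma LFnbr_inl {n k : ℕ} {m : ℕ} (hm : m < n)
    {u : Fin n ⊕ Fin n} (h : (LF.petersen n k).Adj (Sum.inl ⟨m, hm⟩) u) :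
    (∃ (j : ℕ) (hj : j < n), u = Sum.inl ⟨j, hj⟩ ∧ ((m + k) % n = j ∨ (j + k) % n = m)) ∨
      u = Sum.inr ⟨m, hm⟩ := by
  rw [LF.petersen, SimpleGraph.fromRel_adj] at h
  obtain ⟨hne, h⟩ := h
  cases u with
  | inl j => exact Or.inl ⟨j.val, j.isLt, rfl, h⟩
  | inr j =>
    right
    simp only at h
    rcases h with h | h
    · rw [h]
    · exact absurd h (by simp)

/-- Classification of neighbors of an outer vertex. -/
private lemma LFnbr_inr {n k : ℕ} {m : ℕ} (hm : m < n)
    {u : Fin n ⊕ Fin n} (h : (LF.petersen n k).Adj (Sum.inr ⟨m, hm⟩) u) :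
    (∃ (j : ℕ) (hj : j < n), u = Sum.inr ⟨j, hj⟩ ∧ ((m + 1) % n = j ∨ (j + 1) % n = m)) ∨
      u = Sum.inl ⟨m, hm⟩ := by
  rw [LF.petersen, SimpleGraph.fromRel_adj] at h
  obtain ⟨hne, h⟩ := h
  cases u with
  | inr j => exact Or.inl ⟨j.val, j.isLt, rfl, h⟩
  | inl j =>
    right
    simp only at h
    rcases h with h | h
    · exact absurd h (by simp)
    · rw [h]

private lemma LFadj_ll {n k : ℕ} (hk : 1 ≤ k) (hkn : 2 * k + 1 ≤ n) {a b : ℕ}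
    (ha : a < n) (hb : b < n) (hab : (a + k) % n = b) :
    (LF.petersen n k).Adj (Sum.inl ⟨a, ha⟩) (Sum.inl ⟨b, hb⟩) := by
  rw [LF.petersen, SimpleGraph.fromRel_adj]
  refine ⟨?_, Or.inl hab⟩
  intro he
  have hab' : a = b := by
    have := Sum.inl.inj he
    exact congrArg Fin.val this
  rcases LFmod2 (n := n) (a := a + k) (by omega) with ⟨h1, h2⟩ | ⟨h1, h2⟩ <;> omega

private lemma LFadj_rr {n k : ℕ} (hn : 3 ≤ n) {a b : ℕ}
    (ha : a < n) (hb : b < n) (hab : (a + 1) % n = b) :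
    (LF.petersen n k).Adj (Sum.inr ⟨a, ha⟩) (Sum.inr ⟨b, hb⟩) := by
  rw [LF.petersen, SimpleGraph.fromRel_adj]
  refine ⟨?_, Or.inl hab⟩
  intro he
  have hab' : a = b := by
    have := Sum.inr.inj he
    exact congrArg Fin.val this
  rcases LFmod2 (n := n) (a := a + 1) (by omega) with ⟨h1, h2⟩ | ⟨h1, h2⟩ <;> omega

private lemma LFadj_rl {n k : ℕ} {a : ℕ} (ha : a < n) :
    (LF.petersen n k).Adj (Sum.inr ⟨a, ha⟩) (Sum.inl ⟨a, ha⟩) := by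
  rw [LF.petersen, SimpleGraph.fromRel_adj]
  exact ⟨by simp, Or.inr rfl⟩

end Helpers

theorem stmt10 (n k : ℕ) (hn : 3 ≤ n) (hk : 1 ≤ k) (hn2k : 2 * k ≤ n)
    (hkn : 2 * k + 1 ≤ n) :
    LF.IsLeakyForcingSet (LF.petersen n k) 0
      ({v | ∃ j : Fin n, v = Sum.inl j ∧ j.val < 2 * k} ∪
        {Sum.inr ⟨k - 1, by omega⟩, Sum.inr ⟨k, by omega⟩}) := by
  intro L hL v
  have hL0 : L = ∅ := by
    rw [← Set.ncard_eq_zero (Set.toFinite L)]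
    omega
  subst hL0
  set S : Set (Fin n ⊕ Fin n) :=
    ({v | ∃ j : Fin n, v = Sum.inl j ∧ j.val < 2 * k} ∪
        {Sum.inr ⟨k - 1, by omega⟩, Sum.inr ⟨k, by omega⟩}) with hS
  set G := LF.petersen n k with hG
  -- generic forcing step (no leaks)
  have step : ∀ b w, LF.Forced G ∅ S b → G.Adj b w →
      (∀ u, G.Adj b u → u ≠ w → LF.Forced G ∅ S u) → LF.Forced G ∅ S w :=
    fun b w hb ha hall => LF.Forced.force b w hb (Set.notMem_empty b) ha hall
  -- initial vertices
  have initL : ∀ (m : ℕ) (hm : m < n), m < 2 * k → LF.Forced G ∅ S (Sum.inl ⟨m, hm⟩) :=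
    fun m hm h2 => LF.Forced.init _ (Or.inl ⟨⟨m, hm⟩, rfl, h2⟩)
  have initR1 : LF.Forced G ∅ S (Sum.inr ⟨k - 1, by omega⟩) :=
    LF.Forced.init _ (Or.inr (Or.inl rfl))
  have initR2 : LF.Forced G ∅ S (Sum.inr ⟨k, by omega⟩) :=
    LF.Forced.init _ (Or.inr (Or.inr rfl))
  -- downward propagation on the outer cycle: y_{k-1-j} for j ≤ k-1
  have down : ∀ j : ℕ, j ≤ k - 1 → LF.Forced G ∅ S (Sum.inr ⟨k - 1 - j, by omega⟩) := by
    intro j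
    induction j using Nat.strong_induction_on with
    | _ j IH =>
      intro hj
      rcases Nat.eq_zero_or_pos j with rfl | hj1
      · exact initR1
      -- b = inr (k - j)
      have hbF : LF.Forced G ∅ S (Sum.inr ⟨k - j, by omega⟩) := by
        have := IH (j - 1) (by omega) (by omega)
        convert this using 3
        omega
      refine step _ _ hbF ?_ ?_
      · exact (LFadj_rr hn (by omega) (by omega)
          (by rw [Nat.mod_eq_of_lt (show k - 1 - j + 1 < n by omega)]; omega)).symm
      · intro u hu hne
        rcases LFnbr_inr (by omega) hu with ⟨j', hj', rfl, hc⟩ | rfl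
        · rcases hc with hc | hc
          · -- j' = k - j + 1
            have hj'v : j' = k - j + 1 := by
              rw [Nat.mod_eq_of_lt (show k - j + 1 < n by omega)] at hc; omega
            subst hj'v
            rcases Nat.lt_or_ge j 2 with hj2 | hj2
            · -- j = 1, so j' = k
              have : j = 1 := by omega
              subst this
              convert initR2 using 3
              omega
            · have := IH (j - 2) (by omega) (by omega)
              convert this using 3
              omega
          · -- j' + 1 ≡ k - j : j' = k - j - 1, contradiction with hne
            have hj'v : j' = k - j - 1 := by
              rcases LFmod2 (n := n) (a := j' + 1) (by omega) with ⟨h1, h2⟩ | ⟨h1, h2⟩ <;> omega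
            exfalso
            apply hne
            have : j' = k - 1 - j := by omega
            subst this
            rfl
        · exact initL _ _ (by omega)
  -- main upward induction
  have key : ∀ i : ℕ, ∀ hi : i < n,
      LF.Forced G ∅ S (Sum.inl ⟨i, hi⟩) ∧ (k ≤ i → LF.Forced G ∅ S (Sum.inr ⟨i, hi⟩)) := by
    intro i
    induction i using Nat.strong_induction_on with
    | _ i IH =>
      intro hi
      constructor
      · -- inner vertex x_i
        rcases Nat.lt_or_ge i (2 * k) with h2 | h2
        · exact initL _ _ h2
        · -- forced by b = inl (i - k)
          refine step _ _ (IH (i - k) (by omega) (by omega)).1 ?_ ?_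
          · exact LFadj_ll hk hkn (by omega) hi
              (by rw [Nat.mod_eq_of_lt (show i - k + k < n by omega)]; omega)
          · intro u hu hne
            rcases LFnbr_inl (by omega) hu with ⟨j', hj', rfl, hc⟩ | rfl
            · rcases hc with hc | hc
              · -- j' = i : excluded by hne
                exfalso
                apply hne
                have hj'v : j' = i := by
                  rw [Nat.mod_eq_of_lt (show i - k + k < n by omega)] at hc; omega
                subst hj'v
                rfl
              · -- j' = i - 2k
                have hj'v : j' = i - 2 * k := by
                  rcases LFmod2 (n := n) (a := j' + k) (by omega) with ⟨h1, h2⟩ | ⟨h1, h2⟩ <;>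
                    omega
                subst hj'v
                exact (IH (i - 2 * k) (by omega) (by omega)).1
            · exact (IH (i - k) (by omega) (by omega)).2 (by omega)
      · -- outer vertex y_i, k ≤ i
        intro hki
        rcases Nat.eq_or_lt_of_le hki with rfl | hki'
        · convert initR2 using 3
        · -- i ≥ k + 1, forced by b = inr (i - 1)
          refine step _ _ ((IH (i - 1) (by omega) (by omega)).2 (by omega)) ?_ ?_
          · exact LFadj_rr hn (by omega) hi
              (by rw [Nat.mod_eq_of_lt (show i - 1 + 1 < n by omega)]; omega)
          · intro u hu hne
            rcases LFnbr_inr (by omega) hu with ⟨j', hj', rfl, hc⟩ | rfl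
            · rcases hc with hc | hc
              · -- j' = i : excluded by hne
                exfalso
                apply hne
                have hj'v : j' = i := by
                  rw [Nat.mod_eq_of_lt (show i - 1 + 1 < n by omega)] at hc; omega
                subst hj'v
                rfl
              · -- j' = i - 2
                have hj'v : j' = i - 2 := by
                  rcases LFmod2 (n := n) (a := j' + 1) (by omega) with ⟨h1, h2⟩ | ⟨h1, h2⟩ <;>
                    omega
                subst hj'v
                rcases Nat.lt_or_ge i (k + 2) with hik | hik
                · -- i = k + 1, so i - 2 = k - 1
                  convert initR1 using 3
                  omega
                · exact (IH (i - 2) (by omega) (by omega)).2 (by omega)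
            · exact (IH (i - 1) (by omega) (by omega)).1
  -- conclusion
  cases v with
  | inl i => exact (key i.val i.isLt).1
  | inr i =>
    rcases Nat.lt_or_ge i.val k with hik | hik
    · have := down (k - 1 - i.val) (by omega)
      convert this using 3
      omega
    · exact (key i.val i.isLt).2 hik
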